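/- Let G be a directed graph with vertex linear order ≺ and root r. An edge (u,v) belongs to the lexicographically first DFS tree of G rooted at r if and only if (u,v) is the last edge of the lexicographically least simple directed path from r to v in G. -/

import Mathlib

set_option linter.unusedSectionVars false
set_option maxHeartbeats 1000000


/-- `p` is a (nonempty) simple directed path with respect to the edge relation `G`. -/
def DIsPath {V : Type} (G : V → V → Prop) (p : List V) : Prop :=
  p ≠ [] ∧ p.Nodup ∧ p.Chain' G

/-- The out-neighbours of `v` listed in increasing order of the linear order `≤`. -/
def succs {V : Type} [Fintype V] [LinearOrder V] (G : V → V → Prop) [DecidableRel G]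
    (v : V) : List V :=
  (Finset.univ.filter fun w => G v w).sort (· ≤ ·)

/-- One run of depth first search, always exploring the least unvisited out-neighbour
first.  The state is a stack of pairs (vertex, remaining out-neighbours to try) and the
set of visited vertices; the output is the list of tree edges. -/
def dfsRun {V : Type} [Fintype V] [LinearOrder V] (G : V → V → Prop) [DecidableRel G] :
    ℕ → List (V × List V) → Finset V → List (V × V)
  | 0, _, _ => []
  | _ + 1, [], _ => []
  | n + 1, (_, []) :: stk, vis => dfsRun G n stk vis
  | n + 1, (u, w :: ws) :: stk, vis =>
    if w ∈ vis then dfsRun G n ((u, ws) :: stk) vis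
    else (u, w) :: dfsRun G n ((w, succs G w) :: (u, ws) :: stk) (insert w vis)

/-- The edges of the lexicographically first DFS tree of `G` rooted at `r`,
with respect to the linear order on `V`. -/
def lexDFS {V : Type} [Fintype V] [LinearOrder V] (G : V → V → Prop) [DecidableRel G]
    (r : V) : List (V × V) :=
  dfsRun G ((Fintype.card V + 1) * (Fintype.card V + 1) * 4) [(r, succs G r)] {r}

namespace Stmt9
variable {V : Type} [Fintype V] [LinearOrder V] (G : V → V → Prop) [DecidableRel G]

lemma mem_succs {v w : V} : w ∈ succs G v ↔ G v w := by
  simp [succs, Finset.mem_sort, Finset.mem_filter]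

lemma sorted_succs (v : V) : (succs G v).Pairwise (· < ·) := (Finset.sortedLT_sort _).pairwise

def SList (stk : List (V × List V)) : List V := (stk.map Prod.fst).reverse

lemma SList_cons (e : V × List V) (s : List (V × List V)) :
    SList ((e :: s) : List (V × List V)) = SList s ++ [e.1] := by
  simp [SList]

lemma SList_suffix {t stk : List (V × List V)} (h : t <:+ stk) :
    ∃ c, SList stk = SList t ++ c := by
  obtain ⟨c, rfl⟩ := h
  exact ⟨(c.map Prod.fst).reverse, by simp [SList]⟩

lemma suffix_up {t stk : List (V × List V)} (h : t <:+ stk) (hne : t ≠ stk) :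
    ∃ a, (a :: t) <:+ stk := by
  obtain ⟨c, rfl⟩ := h
  rcases c.eq_nil_or_concat with rfl | ⟨c', a, rfl⟩
  · simp at hne
  · exact ⟨a, c', by simp⟩

lemma lex_strict_prefix {r : V → V → Prop} (l x : List V) (hx : x ≠ []) :
    List.Lex r l (l ++ x) := by
  rcases x with _ | ⟨a, t⟩
  · simp at hx
  · have : List.Lex r ([] : List V) (a :: t) := List.Lex.nil
    simpa using List.Lex.append_left r this l

lemma lex_diverge {a b : V} (h : a < b) (c s t : List V) :
    List.Lex (· < ·) (c ++ a :: s) (c ++ b :: t) :=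
  List.Lex.append_left _ (List.Lex.rel h) c

def FPath (stk : List (V × List V)) (vis : Finset V) (p : List V) : Prop :=
  ∃ u l s w q, ((u, l) :: s) <:+ stk ∧ w ∈ l ∧
    p = SList (((u, l) :: s) : List (V × List V)) ++ w :: q ∧
    (w :: q).Nodup ∧ (∀ x ∈ w :: q, x ∉ vis) ∧ (w :: q).Chain' G

def Inv (stk : List (V × List V)) (vis : Finset V) : Prop :=
  (SList stk).Nodup ∧ (∀ x ∈ SList stk, x ∈ vis) ∧
  (∀ e ∈ stk, e.2 <:+ succs G e.1) ∧
  List.Chain' (fun a b => ∀ x ∈ b.2, a.1 < x) stk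

section Push
variable {vk w : V} {ws : List V} {rest : List (V × List V)} {vis : Finset V}

lemma SList_push :
    SList (((w, succs G w) :: (vk, ws) :: rest) : List (V × List V)) =
      SList (((vk, w :: ws) :: rest) : List (V × List V)) ++ [w] := by
  simp [SList]

lemma SList_old_eq :
    SList (((vk, w :: ws) :: rest) : List (V × List V)) =
      SList (((vk, ws) :: rest) : List (V × List V)) := by
  simp [SList]

/-- every path discoverable from the new state was discoverable from the old state -/
lemma FPath_push_subset (hw : w ∉ vis) {p : List V}
    (h : FPath G (((w, succs G w) :: (vk, ws) :: rest) : List (V × List V)) (insert w vis) p) :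
    FPath G (((vk, w :: ws) :: rest) : List (V × List V)) vis p := by
  obtain ⟨u, l, s0, w', q, hsuf, hw', hp, h1, h2, h3⟩ := h
  have h2' : ∀ x ∈ w' :: q, x ∉ vis := fun x hx => fun hv => h2 x hx (Finset.mem_insert_of_mem hv)
  have hnw : ∀ x ∈ w' :: q, x ≠ w := fun x hx heq =>
    h2 x hx (by rw [heq]; exact Finset.mem_insert_self w vis)
  rcases List.suffix_cons_iff.mp hsuf with heq | hsuf'
  · obtain ⟨he, hs⟩ := List.cons_eq_cons.mp heq
    obtain ⟨hu, hl⟩ := Prod.mk.inj he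
    have hu' := hu.symm; subst hu'; subst hl; subst hs
    refine ⟨vk, w :: ws, rest, w, w' :: q, List.suffix_refl _, by simp, ?_, ?_, ?_, ?_⟩
    · rw [hp, SList_push, SList_old_eq]; simp
    · rw [List.nodup_cons]
      exact ⟨fun hmem => hnw _ hmem rfl, h1⟩
    · intro x hx
      rcases List.mem_cons.mp hx with rfl | hx'
      · exact hw
      · exact h2' x hx'
    · exact List.IsChain.cons_cons ((mem_succs G).mp hw') h3
  rcases List.suffix_cons_iff.mp hsuf' with heq | hsuf''
  · obtain ⟨he, hs⟩ := List.cons_eq_cons.mp heq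
    obtain ⟨hu, hl⟩ := Prod.mk.inj he
    have hu' := hu.symm; subst hu'
    have hl' := hl.symm; subst hl'
    have hs' := hs.symm; subst hs'
    exact ⟨vk, w :: ws, rest, w', q, List.suffix_refl _, List.mem_cons_of_mem _ hw',
      by rw [hp]; simp [SList], h1, h2', h3⟩
  · exact ⟨u, l, s0, w', q, hsuf''.trans (List.suffix_cons _ _), hw', hp, h1, h2', h3⟩

/-- the newly discovered path is the minimum of all discoverable paths -/
lemma FPath_push_min (hInv : Inv G (((vk, w :: ws) :: rest) : List (V × List V)) vis)
    (hw : w ∉ vis) {p : List V}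
    (h : FPath G (((vk, w :: ws) :: rest) : List (V × List V)) vis p) :
    SList (((vk, w :: ws) :: rest) : List (V × List V)) ++ [w] = p ∨
      List.Lex (· < ·) (SList (((vk, w :: ws) :: rest) : List (V × List V)) ++ [w]) p := by
  obtain ⟨hnd, hvis, hsfx, hch⟩ := hInv
  obtain ⟨u, l, s0, w1, q, hsuf, hw1, hp, h1, h2, h3⟩ := h
  by_cases ht : ((u, l) :: s0 : List (V × List V)) = (vk, w :: ws) :: rest
  · obtain ⟨he, hs⟩ := List.cons_eq_cons.mp ht
    obtain ⟨hu, hl⟩ := Prod.mk.inj he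
    have hu' := hu.symm; subst hu'; subst hl
    have hs' := hs.symm; subst hs'
    rcases List.mem_cons.mp hw1 with rfl | hws
    · rcases q with _ | ⟨w2, q'⟩
      · left; rw [hp]
      · right; rw [hp]
        have heq2 : SList ((vk, w1 :: ws) :: rest : List (V × List V)) ++ w1 :: w2 :: q' =
            (SList ((vk, w1 :: ws) :: rest : List (V × List V)) ++ [w1]) ++ w2 :: q' := by simp
        rw [heq2]
        exact lex_strict_prefix _ _ (List.cons_ne_nil _ _)
    · right; rw [hp]
      have hwlt : w < w1 := by
        have hsorted : (w :: ws).Pairwise (· < ·) :=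
          ((sorted_succs G vk).sublist (hsfx (vk, w :: ws) (by simp)).sublist)
        exact (List.pairwise_cons.mp hsorted).1 _ hws
      exact lex_diverge hwlt _ _ _
  · obtain ⟨a, hat⟩ := suffix_up hsuf ht
    have hlt : a.1 < w1 := by
      have hcc : List.Chain' (fun a b => ∀ x ∈ b.2, a.1 < x) (a :: (u, l) :: s0) :=
        hch.suffix hat
      exact (List.isChain_cons_cons.mp hcc).1 w1 hw1
    obtain ⟨c, hc⟩ := SList_suffix hat
    rw [SList_cons a ((u, l) :: s0)] at hc
    right
    rw [hp, hc]
    have := lex_diverge hlt (SList ((u, l) :: s0 : List (V × List V))) (c ++ [w]) q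
    simpa [List.append_assoc] using this

/-- every old discoverable path ending at `v ≠ w` is either still discoverable,
or beaten by a new discoverable path with the same endpoint. -/
lemma FPath_push_covered (hInv : Inv G (((vk, w :: ws) :: rest) : List (V × List V)) vis)
    (hw : w ∉ vis) {p : List V} {v : V}
    (h : FPath G (((vk, w :: ws) :: rest) : List (V × List V)) vis p)
    (hlast : p.getLast? = some v) (hvw : v ≠ w) :
    FPath G (((w, succs G w) :: (vk, ws) :: rest) : List (V × List V)) (insert w vis) p ∨
      ∃ p', FPath G (((w, succs G w) :: (vk, ws) :: rest) : List (V × List V)) (insert w vis) p' ∧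
        p'.getLast? = some v ∧ List.Lex (· < ·) p' p := by
  obtain ⟨hnd, hvis, hsfx, hch⟩ := hInv
  obtain ⟨u, l, s0, w1, q, hsuf, hw1, hp, h1, h2, h3⟩ := h
  by_cases hto : ((u, l) :: s0 : List (V × List V)) = (vk, w :: ws) :: rest ∧ w1 = w
  · -- the path starts with the new tree edge: it survives with the new top entry
    left
    obtain ⟨ht, hww⟩ := hto
    obtain ⟨he, hs⟩ := List.cons_eq_cons.mp ht
    obtain ⟨hu, hl⟩ := Prod.mk.inj he
    have hu' := hu.symm; subst hu'; subst hl
    have hs' := hs.symm; subst hs'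
    subst hww
    rcases q with _ | ⟨w2, q'⟩
    · exfalso
      apply hvw
      rw [hp, List.getLast?_append_of_ne_nil _ (by simp : [w1] ≠ [])] at hlast
      simpa using hlast.symm
    · have hGw : G w1 w2 := (List.isChain_cons_cons.mp h3).1
      refine ⟨w1, succs G w1, (vk, ws) :: rest, w2, q', List.suffix_refl _,
        (mem_succs G).mpr hGw, by rw [hp, SList_push]; simp, h1.of_cons, ?_, h3.tail⟩
      intro x hx
      rw [Finset.mem_insert]
      push_neg
      refine ⟨?_, h2 x (List.mem_cons_of_mem _ hx)⟩
      rintro rfl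
      exact (List.nodup_cons.mp h1).1 hx
  by_cases hmem : w ∈ w1 :: q
  case neg =>
    -- p avoids w entirely, hence survives
    left
    have h2' : ∀ x ∈ w1 :: q, x ∉ insert w vis := by
      intro x hx
      rw [Finset.mem_insert]
      push_neg
      exact ⟨fun hxw => hmem (hxw ▸ hx), h2 x hx⟩
    rcases List.suffix_cons_iff.mp hsuf with heq | hsuf'
    · obtain ⟨he, hs⟩ := List.cons_eq_cons.mp heq
      obtain ⟨hu, hl⟩ := Prod.mk.inj he
      have hu' := hu.symm; subst hu'; subst hl
      have hs' := hs.symm; subst hs'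
      have hw1' : w1 ∈ ws := by
        rcases List.mem_cons.mp hw1 with rfl | h'
        · exact absurd (List.mem_cons_self) hmem
        · exact h'
      exact ⟨vk, ws, rest, w1, q, (List.suffix_cons _ _), hw1',
        by rw [hp]; simp [SList], h1, h2', h3⟩
    · exact ⟨u, l, s0, w1, q,
        hsuf'.trans ((List.suffix_cons _ _).trans (List.suffix_cons _ _)), hw1, hp, h1, h2', h3⟩
  case pos =>
    -- p passes through w; replace the portion before w by the new stack path
    right
    obtain ⟨q₁, q₂, hsplit⟩ := List.append_of_mem hmem
    have hq₂ : q₂ ≠ [] := by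
      rintro rfl
      apply hvw
      rw [hp, List.getLast?_append_of_ne_nil _ (by simp : w1 :: q ≠ []), hsplit,
        List.getLast?_append_cons] at hlast
      simpa using hlast.symm
    rcases q₂ with _ | ⟨w2, q₂'⟩
    · exact absurd rfl hq₂
    have hsub : (w :: w2 :: q₂') <:+ (w1 :: q) := ⟨q₁, hsplit.symm⟩
    have hnd2 : (w :: w2 :: q₂').Nodup := h1.sublist hsub.sublist
    have hch2 : (w :: w2 :: q₂').Chain' G := h3.suffix hsub
    have hGw : G w w2 := (List.isChain_cons_cons.mp hch2).1
    refine ⟨SList (((vk, w :: ws) :: rest) : List (V × List V)) ++ w :: w2 :: q₂',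
      ⟨w, succs G w, (vk, ws) :: rest, w2, q₂', List.suffix_refl _, (mem_succs G).mpr hGw,
        by rw [SList_push]; simp, hnd2.of_cons, ?_, hch2.tail⟩, ?_, ?_⟩
    · intro x hx
      rw [Finset.mem_insert]
      push_neg
      constructor
      · rintro rfl
        exact (List.nodup_cons.mp hnd2).1 hx
      · exact h2 x (hsub.subset (List.mem_cons_of_mem _ hx))
    · -- same endpoint
      rw [List.getLast?_append_of_ne_nil _ (by simp : w :: w2 :: q₂' ≠ [])]
      rw [hp, List.getLast?_append_of_ne_nil _ (by simp : w1 :: q ≠ []), hsplit,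
        List.getLast?_append_cons] at hlast
      exact hlast
    · -- the new path is lexicographically smaller
      rw [hp]
      by_cases ht : ((u, l) :: s0 : List (V × List V)) = (vk, w :: ws) :: rest
      · obtain ⟨he, hs⟩ := List.cons_eq_cons.mp ht
        obtain ⟨hu, hl⟩ := Prod.mk.inj he
        have hu' := hu.symm; subst hu'; subst hl
        have hs' := hs.symm; subst hs'
        have hw1' : w1 ∈ ws := by
          rcases List.mem_cons.mp hw1 with heq1 | h'
          · exact absurd ⟨rfl, heq1⟩ hto
          · exact h'
        have hwlt : w < w1 := by
          have hsorted : (w :: ws).Pairwise (· < ·) :=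
            ((sorted_succs G vk).sublist (hsfx (vk, w :: ws) (by simp)).sublist)
          exact (List.pairwise_cons.mp hsorted).1 _ hw1'
        exact lex_diverge hwlt _ _ _
      · obtain ⟨a, hat⟩ := suffix_up hsuf ht
        have hlt : a.1 < w1 := by
          have hcc : List.Chain' (fun a b => ∀ x ∈ b.2, a.1 < x) (a :: (u, l) :: s0) :=
            hch.suffix hat
          exact (List.isChain_cons_cons.mp hcc).1 w1 hw1
        obtain ⟨c, hc⟩ := SList_suffix hat
        rw [SList_cons a ((u, l) :: s0)] at hc
        rw [hc]
        have := lex_diverge hlt (SList ((u, l) :: s0 : List (V × List V)))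
          (c ++ w :: w2 :: q₂') q
        simpa [List.append_assoc] using this

lemma Inv_push (hInv : Inv G (((vk, w :: ws) :: rest) : List (V × List V)) vis)
    (hw : w ∉ vis) :
    Inv G (((w, succs G w) :: (vk, ws) :: rest) : List (V × List V)) (insert w vis) := by
  obtain ⟨hnd, hvis, hsfx, hch⟩ := hInv
  refine ⟨?_, ?_, ?_, ?_⟩
  · rw [SList_push]
    rw [List.nodup_append]
    refine ⟨hnd, List.nodup_singleton _, ?_⟩
    intro x hx
    simp only [List.mem_singleton]
    rintro b rfl rfl
    exact hw (hvis _ hx)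
  · rw [SList_push]
    intro x hx
    rcases List.mem_append.mp hx with h | h
    · exact Finset.mem_insert_of_mem (hvis x h)
    · rw [List.mem_singleton] at h
      subst h; exact Finset.mem_insert_self _ _
  · intro e he
    rcases List.mem_cons.mp he with rfl | he'
    · exact List.suffix_refl _
    rcases List.mem_cons.mp he' with rfl | he''
    · exact (List.suffix_cons w ws).trans (hsfx (vk, w :: ws) (List.mem_cons_self))
    · exact hsfx e (List.mem_cons_of_mem _ he'')
  · have hsorted : (w :: ws).Pairwise (· < ·) :=
      ((sorted_succs G vk).sublist (hsfx (vk, w :: ws) (List.mem_cons_self)).sublist)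
    refine List.isChain_cons_cons.mpr ⟨(List.pairwise_cons.mp hsorted).1, ?_⟩
    rcases rest with _ | ⟨b, rest'⟩
    · simp
    · exact List.isChain_cons_cons.mpr ⟨(List.isChain_cons_cons.mp hch).1, (List.isChain_cons_cons.mp hch).2⟩

lemma Inv_skip (hInv : Inv G (((vk, w :: ws) :: rest) : List (V × List V)) vis) :
    Inv G (((vk, ws) :: rest) : List (V × List V)) vis := by
  obtain ⟨hnd, hvis, hsfx, hch⟩ := hInv
  rw [SList_cons] at hnd hvis
  refine ⟨by rw [SList_cons]; exact hnd, by rw [SList_cons]; exact hvis, ?_, ?_⟩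
  · intro e he
    rcases List.mem_cons.mp he with rfl | he'
    · exact (List.suffix_cons w ws).trans (hsfx (vk, w :: ws) (List.mem_cons_self))
    · exact hsfx e (List.mem_cons_of_mem _ he')
  · rcases rest with _ | ⟨b, rest'⟩
    · exact List.isChain_singleton _
    · exact List.isChain_cons_cons.mpr ⟨(List.isChain_cons_cons.mp hch).1, (List.isChain_cons_cons.mp hch).2⟩

lemma Inv_pop {e : V × List V} {stk : List (V × List V)}
    (hInv : Inv G ((e :: stk) : List (V × List V)) vis) : Inv G stk vis := by
  obtain ⟨hnd, hvis, hsfx, hch⟩ := hInv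
  rw [SList_cons] at hnd hvis
  exact ⟨(List.nodup_append.mp hnd).1, fun x hx => hvis x (List.mem_append_left _ hx),
    fun e' he' => hsfx e' (List.mem_cons_of_mem _ he'),
    hch.suffix (List.suffix_cons _ _)⟩

end Push

def meas (stk : List (V × List V)) (vis : Finset V) : ℕ :=
  (stk.map fun e => e.2.length + 1).sum + (Fintype.card V + 2) * (Finset.univ \ vis).card

lemma meas_pos {e : V × List V} {stk : List (V × List V)} {vis : Finset V} :
    1 ≤ meas ((e :: stk) : List (V × List V)) vis := by
  simp only [meas, List.map_cons, List.sum_cons]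
  omega

lemma meas_pop {vk : V} {stk : List (V × List V)} {vis : Finset V} :
    meas stk vis + 1 = meas (((vk, ([] : List V)) :: stk) : List (V × List V)) vis := by
  simp [meas]; ring

lemma meas_skip {vk w : V} {ws : List V} {stk : List (V × List V)} {vis : Finset V} :
    meas (((vk, ws) :: stk) : List (V × List V)) vis + 1 =
      meas (((vk, w :: ws) :: stk) : List (V × List V)) vis := by
  simp [meas]; ring

lemma meas_push {vk w : V} {ws : List V} {rest : List (V × List V)} {vis : Finset V}
    (hw : w ∉ vis) :
    meas (((w, succs G w) :: (vk, ws) :: rest) : List (V × List V)) (insert w vis) + 1 ≤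
      meas (((vk, w :: ws) :: rest) : List (V × List V)) vis := by
  have hmemw : w ∈ Finset.univ \ vis := Finset.mem_sdiff.mpr ⟨Finset.mem_univ _, hw⟩
  have hD : 1 ≤ (Finset.univ \ vis).card := Finset.card_pos.mpr ⟨w, hmemw⟩
  have hcard : (Finset.univ \ insert w vis).card = (Finset.univ \ vis).card - 1 := by
    rw [Finset.sdiff_insert, Finset.card_erase_of_mem hmemw]
  have hlen : (succs G w).length ≤ Fintype.card V := by
    rw [succs, Finset.length_sort]
    exact le_trans (Finset.card_filter_le _ _) le_rfl
  simp only [meas, List.map_cons, List.sum_cons, List.length_cons, hcard]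
  have hmul : (Fintype.card V + 2) * (Finset.univ \ vis).card =
      (Fintype.card V + 2) * ((Finset.univ \ vis).card - 1) + (Fintype.card V + 2) := by
    obtain ⟨k, hk⟩ := Nat.exists_eq_add_of_le hD
    rw [hk, Nat.add_sub_cancel_left]
    ring
  omega

lemma lex_trans {p q r : List V} (h1 : List.Lex (· < ·) p q) (h2 : List.Lex (· < ·) q r) :
    List.Lex (· < ·) p r := List.lex_trans (fun h1 h2 => lt_trans h1 h2) h1 h2

lemma lex_asymm {p q : List V} (h1 : List.Lex (· < ·) p q) (h2 : List.Lex (· < ·) q p) : False :=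
  asymm_of (List.Lex (· < ·)) h1 h2

def IsMinEdge (S : List V → Prop) (u v : V) : Prop :=
  ∃ p, S p ∧ p.getLast? = some v ∧
    (∀ q, S q → q.getLast? = some v → p = q ∨ List.Lex (· < ·) p q) ∧
    ∃ p₀, p = p₀ ++ [u, v]

lemma FPath_nil {vis : Finset V} {p : List V} : ¬ FPath G [] vis p := by
  rintro ⟨u, l, s, w, q, hsuf, -⟩
  simpa using List.eq_nil_of_suffix_nil hsuf

lemma FPath_last_not_vis {stk : List (V × List V)} {vis : Finset V} {p : List V} {v : V}
    (h : FPath G stk vis p) (hl : p.getLast? = some v) : v ∉ vis := by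
  obtain ⟨u, l, s, w, q, _, _, rfl, _, hvis, _⟩ := h
  rw [List.getLast?_append_of_ne_nil _ (l₂ := w :: q) (by simp)] at hl
  obtain ⟨hne, rfl⟩ := List.mem_getLast?_eq_getLast (by exact hl)
  exact hvis _ (List.getLast_mem hne)

lemma FPath_pop {v : V} {stk : List (V × List V)} {vis : Finset V} {p : List V} :
    FPath G (((v, ([] : List V)) :: stk)) vis p ↔ FPath G stk vis p := by
  constructor
  · rintro ⟨u, l, s, w, q, hsuf, hw, rfl, h1, h2, h3⟩
    rcases List.suffix_cons_iff.mp hsuf with heq | hsuf'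
    · obtain ⟨he, hs⟩ := List.cons_eq_cons.mp heq
      obtain ⟨hu, hl⟩ := Prod.mk.inj he
      subst hl; simp at hw
    · exact ⟨u, l, s, w, q, hsuf', hw, rfl, h1, h2, h3⟩
  · rintro ⟨u, l, s, w, q, hsuf, hw, rfl, h1, h2, h3⟩
    exact ⟨u, l, s, w, q, hsuf.trans (List.suffix_cons _ _), hw, rfl, h1, h2, h3⟩

lemma FPath_skip {v w : V} {ws : List V} {stk : List (V × List V)} {vis : Finset V}
    {p : List V} (hw : w ∈ vis) :
    FPath G (((v, w :: ws) :: stk)) vis p ↔ FPath G (((v, ws) :: stk)) vis p := by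
  constructor
  · rintro ⟨u, l, s, w', q, hsuf, hw', rfl, h1, h2, h3⟩
    rcases List.suffix_cons_iff.mp hsuf with heq | hsuf'
    · obtain ⟨he, hs⟩ := List.cons_eq_cons.mp heq
      obtain ⟨hu, hl⟩ := Prod.mk.inj he
      subst hu; subst hl; subst hs
      have hws : w' ∈ ws := by
        rcases List.mem_cons.mp hw' with rfl | h
        · exact absurd hw (h2 w' (by simp))
        · exact h
      exact ⟨u, ws, s, w', q, List.suffix_refl _, hws, by simp [SList], h1, h2, h3⟩
    · exact ⟨u, l, s, w', q, hsuf'.trans (List.suffix_cons _ _), hw', rfl, h1, h2, h3⟩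
  · rintro ⟨u, l, s, w', q, hsuf, hw', rfl, h1, h2, h3⟩
    rcases List.suffix_cons_iff.mp hsuf with heq | hsuf'
    · obtain ⟨he, hs⟩ := List.cons_eq_cons.mp heq
      obtain ⟨hu, hl⟩ := Prod.mk.inj he
      subst hu; subst hl; subst hs
      exact ⟨u, w :: l, s, w', q, List.suffix_refl _, List.mem_cons_of_mem _ hw',
        by simp [SList], h1, h2, h3⟩
    · exact ⟨u, l, s, w', q, hsuf'.trans (List.suffix_cons _ _), hw', rfl, h1, h2, h3⟩

lemma dfsRun_pop (n : ℕ) (vk : V) (rest : List (V × List V)) (vis : Finset V) :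
    dfsRun G (n + 1) ((vk, ([] : List V)) :: rest) vis = dfsRun G n rest vis := rfl

lemma dfsRun_step (n : ℕ) (vk w : V) (ws : List V) (rest : List (V × List V)) (vis : Finset V) :
    dfsRun G (n + 1) ((vk, w :: ws) :: rest) vis =
      if w ∈ vis then dfsRun G n ((vk, ws) :: rest) vis
      else (vk, w) :: dfsRun G n ((w, succs G w) :: (vk, ws) :: rest) (insert w vis) := rfl

lemma dfs_main : ∀ (n : ℕ) (stk : List (V × List V)) (vis : Finset V),
    Inv G stk vis → meas stk vis ≤ n → ∀ u v : V,
    ((u, v) ∈ dfsRun G n stk vis ↔ IsMinEdge (FPath G stk vis) u v) := by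
  intro n
  induction n with
  | zero =>
    intro stk vis hInv hm u v
    have hstk : stk = [] := by
      rcases stk with _ | ⟨e, t⟩
      · rfl
      · exact absurd hm (by have := meas_pos (e := e) (stk := t) (vis := vis); omega)
    subst hstk
    simp only [dfsRun, List.not_mem_nil, false_iff]
    rintro ⟨p, hF, -⟩
    exact FPath_nil G hF
  | succ n ih =>
    intro stk vis hInv hm u v
    rcases stk with _ | ⟨⟨vk, l⟩, rest⟩
    · simp only [dfsRun, List.not_mem_nil, false_iff]
      rintro ⟨p, hF, -⟩
      exact FPath_nil G hF
    rcases l with _ | ⟨w, ws⟩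
    · -- pop
      have hS : FPath G (((vk, ([] : List V)) :: rest)) vis = FPath G rest vis :=
        funext fun p => propext (FPath_pop G)
      have hm' : meas rest vis ≤ n := by
        have h := meas_pop (vk := vk) (stk := rest) (vis := vis); omega
      rw [dfsRun_pop, hS]
      exact ih rest vis (Inv_pop G hInv) hm' u v
    by_cases hw : w ∈ vis
    · -- skip
      have hS : FPath G (((vk, w :: ws) :: rest)) vis = FPath G (((vk, ws) :: rest)) vis :=
        funext fun p => propext (FPath_skip G hw)
      have hm' : meas ((vk, ws) :: rest) vis ≤ n := by
        have h := meas_skip (vk := vk) (w := w) (ws := ws) (stk := rest) (vis := vis); omega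
      rw [dfsRun_step, if_pos hw, hS]
      exact ih _ vis (Inv_skip G hInv) hm' u v
    · -- push
      have hm' : meas ((w, succs G w) :: (vk, ws) :: rest) (insert w vis) ≤ n := by
        have h := meas_push (G := G) (vk := vk) (ws := ws) (rest := rest) hw; omega
      have hrec := ih ((w, succs G w) :: (vk, ws) :: rest) (insert w vis)
        (Inv_push G hInv hw) hm' u v
      rw [dfsRun_step, if_neg hw, List.mem_cons, hrec]
      set old : List (V × List V) := (vk, w :: ws) :: rest with hold
      have hF1 : FPath G old vis (SList old ++ [w]) := by
        refine ⟨vk, w :: ws, rest, w, [], List.suffix_refl _, List.mem_cons_self, rfl,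
          List.nodup_singleton _, ?_, List.isChain_singleton _⟩
        intro x hx
        rw [List.mem_singleton] at hx
        subst hx
        exact hw
      have hF5 : (SList old ++ [w]).getLast? = some w := by
        rw [List.getLast?_append_of_ne_nil _ (by simp : [w] ≠ [])]; rfl
      constructor
      · rintro (heq | hmin)
        · obtain ⟨hu, hv⟩ := Prod.mk.inj heq
          rw [hu, hv]
          refine ⟨SList old ++ [w], hF1, hF5, fun q hq _ => FPath_push_min G hInv hw hq,
            SList rest, ?_⟩
          rw [hold, SList_cons]
          simp
        · obtain ⟨p, hp, hl, hmin', hend⟩ := hmin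
          have hvw : v ≠ w := by
            have := FPath_last_not_vis G hp hl
            intro hvw; exact this (hvw ▸ Finset.mem_insert_self _ _)
          refine ⟨p, FPath_push_subset G hw hp, hl, ?_, hend⟩
          intro q hq hlq
          rcases FPath_push_covered G hInv hw hq hlq hvw with hqn | ⟨q', hq', hlq', hlex⟩
          · exact hmin' q hqn hlq
          · rcases hmin' q' hq' hlq' with rfl | h
            · right; exact hlex
            · right; exact lex_trans h hlex
      · rintro ⟨p, hp, hl, hmin, p₁, hend⟩
        by_cases hvweq : v = w
        · left
          have hF5' : (SList old ++ [w]).getLast? = some v := by rw [hvweq]; exact hF5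
          have hpeq : p = SList old ++ [w] := by
            rcases FPath_push_min G hInv hw hp with heq | h2
            · exact heq.symm
            · rcases hmin _ hF1 hF5' with heq | h3
              · exact heq
              · exact absurd h3 (fun h3 => lex_asymm h2 h3)
          have hthis : p₁ ++ [u, v] = SList rest ++ [vk, w] := by
            rw [← hend, hpeq, hold, SList_cons]
            simp
          have h2 := (List.append_inj' hthis (by simp)).2
          obtain ⟨hu, hv⟩ := List.cons_eq_cons.mp h2
          obtain ⟨hv2, -⟩ := List.cons_eq_cons.mp hv
          rw [hu, hv2]
        · right
          rcases FPath_push_covered G hInv hw hp hl hvweq with hpn | ⟨p', hp', hl', hlex⟩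
          · exact ⟨p, hpn, hl, fun q hq hlq => hmin q (FPath_push_subset G hw hq) hlq, p₁, hend⟩
          · exfalso
            rcases hmin p' (FPath_push_subset G hw hp') hl' with rfl | h
            · exact lex_asymm hlex hlex
            · exact lex_asymm h hlex

lemma length_succs_le (v : V) : (succs G v).length ≤ Fintype.card V := by
  rw [succs, Finset.length_sort]
  exact le_trans (Finset.card_filter_le _ _) le_rfl

lemma S0_iff {r : V} {p : List V} :
    FPath G [(r, succs G r)] {r} p ↔ DIsPath G p ∧ p.head? = some r ∧ 2 ≤ p.length := by
  constructor
  · rintro ⟨u', l', s', w1, q, hsuf, hw1, hp, h1, h2, h3⟩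
    have heq : ((u', l') :: s' : List (V × List V)) = [(r, succs G r)] := by
      rcases List.suffix_cons_iff.mp hsuf with h | h
      · exact h
      · exact absurd (List.eq_nil_of_suffix_nil h) (List.cons_ne_nil _ _)
    obtain ⟨he, hs⟩ := List.cons_eq_cons.mp heq
    obtain ⟨hu, hl⟩ := Prod.mk.inj he
    have hu' := hu.symm; subst hu'; subst hl; subst hs
    have hp' : p = r :: w1 :: q := by rw [hp]; simp [SList]
    subst hp'
    have hrq : r ∉ w1 :: q := fun hmem => h2 r hmem (Finset.mem_singleton_self r)
    refine ⟨⟨List.cons_ne_nil _ _, List.nodup_cons.mpr ⟨hrq, h1⟩,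
      List.isChain_cons_cons.mpr ⟨(mem_succs G).mp hw1, h3⟩⟩, rfl, by simp⟩
  · rintro ⟨⟨hne, hnd, hch⟩, hhead, hlen⟩
    rcases p with _ | ⟨a, _ | ⟨b, t⟩⟩
    · exact absurd rfl hne
    · simp at hlen
    · have ha : a = r := by simpa using hhead
      subst ha
      refine ⟨a, succs G a, [], b, t, List.suffix_refl _,
        (mem_succs G).mpr (List.isChain_cons_cons.mp hch).1, by simp [SList],
        (List.nodup_cons.mp hnd).2, ?_, (List.isChain_cons_cons.mp hch).2⟩
      intro x hx
      rw [Finset.mem_singleton]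
      rintro rfl
      exact (List.nodup_cons.mp hnd).1 hx

theorem stmt9' (r u v : V) :
    (u, v) ∈ dfsRun G ((Fintype.card V + 1) * (Fintype.card V + 1) * 4) [(r, succs G r)] {r} ↔
      ∃ p : List V,
        DIsPath G p ∧ p.head? = some r ∧ p.getLast? = some v ∧
        (∀ q : List V, DIsPath G q → q.head? = some r → q.getLast? = some v →
          p = q ∨ List.Lex (· < ·) p q) ∧
        (∃ q : List V, p = q ++ [u, v]) := by
  have hInv : Inv G [(r, succs G r)] {r} := by
    refine ⟨by simp [SList], by simp [SList], ?_, List.isChain_singleton _⟩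
    intro e he
    rw [List.mem_singleton] at he
    subst he
    exact List.suffix_refl _
  have hmeas : meas [(r, succs G r)] ({r} : Finset V) ≤
      (Fintype.card V + 1) * (Fintype.card V + 1) * 4 := by
    have ha : (succs G r).length ≤ Fintype.card V := length_succs_le G r
    have hb : (Finset.univ \ ({r} : Finset V)).card ≤ Fintype.card V := by
      exact le_trans (Finset.card_le_univ _) le_rfl
    have h3 : (Fintype.card V + 2) * (Finset.univ \ ({r} : Finset V)).card ≤
        (Fintype.card V + 2) * Fintype.card V := Nat.mul_le_mul_left _ hb
    have h4 : (Fintype.card V + 1) * (Fintype.card V + 1) * 4 =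
        4 * (Fintype.card V * Fintype.card V) + 8 * Fintype.card V + 4 := by ring
    have h5 : (Fintype.card V + 2) * Fintype.card V =
        Fintype.card V * Fintype.card V + 2 * Fintype.card V := by ring
    simp only [meas, List.map_cons, List.map_nil, List.sum_cons, List.sum_nil]
    omega
  rw [dfs_main G _ _ _ hInv hmeas u v]
  constructor
  · rintro ⟨p, hS, hl, hmin, hend⟩
    have hvr : v ≠ r := by
      have := FPath_last_not_vis G hS hl
      simpa using this
    obtain ⟨hpath, hhead, hlen⟩ := (S0_iff G).mp hS
    refine ⟨p, hpath, hhead, hl, ?_, hend⟩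
    intro q hq hhq hlq
    rcases q with _ | ⟨a, _ | ⟨b, t⟩⟩
    · exact absurd rfl hq.1
    · exfalso
      apply hvr
      simp only [List.head?_cons, Option.some.injEq] at hhq
      simp only [List.getLast?_singleton, Option.some.injEq] at hlq
      rw [← hlq, hhq]
    · exact hmin _ ((S0_iff G).mpr ⟨hq, hhq, by simp⟩) hlq
  · rintro ⟨p, hpath, hhead, hl, hmin, p₁, hend⟩
    have hlen : 2 ≤ p.length := by rw [hend]; simp
    refine ⟨p, (S0_iff G).mpr ⟨hpath, hhead, hlen⟩, hl, ?_, p₁, hend⟩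
    intro q hq hlq
    obtain ⟨hqpath, hqhead, -⟩ := (S0_iff G).mp hq
    exact hmin q hqpath hqhead hlq

end Stmt9

theorem stmt9 {V : Type} [Fintype V] [LinearOrder V] (G : V → V → Prop) [DecidableRel G]
    (r u v : V) :
    (u, v) ∈ lexDFS G r ↔
      ∃ p : List V,
        -- p is the lexicographically least simple directed path from r to v in G
        DIsPath G p ∧ p.head? = some r ∧ p.getLast? = some v ∧
        (∀ q : List V, DIsPath G q → q.head? = some r → q.getLast? = some v →
          p = q ∨ List.Lex (· < ·) p q) ∧
        -- and (u, v) is the last edge of p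
        (∃ q : List V, p = q ++ [u, v]) := by
  rw [lexDFS]
  exact Stmt9.stmt9' G r u v
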